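/- Let L ≥ 2 and let U_1, …, U_L ∈ ℝ^{n×n} satisfy U_{i+1}^⊤ U_{i+1} − U_i U_i^⊤ = λ_i I_n for i = 1, …, L−1, for some real numbers λ_1, …, λ_{L−1}. Define a_k := Σ_{i=1}^k λ_{L−i} for k = 1, …, L−1. Then every eigenvalue of the positive semidefinite matrix U_L U_L^⊤ is greater than or equal to max(0, a_1, …, a_{L−1}). -/

import Mathlib

open Matrix

lemma psd_spectrum_nonneg {n : ℕ} (A : Matrix (Fin n) (Fin n) ℝ) {μ : ℝ}
    (hμ : μ ∈ spectrum ℝ (A * Aᵀ)) : 0 ≤ μ := by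
  have hpsd : (A * Aᴴ).PosSemidef := posSemidef_self_mul_conjTranspose A
  rw [conjTranspose_eq_transpose_of_trivial] at hpsd
  rw [hpsd.1.spectrum_real_eq_range_eigenvalues] at hμ
  obtain ⟨i, rfl⟩ := hμ
  exact hpsd.eigenvalues_nonneg i

lemma spectrum_mul_comm' {n : ℕ} (A B : Matrix (Fin n) (Fin n) ℝ) :
    spectrum ℝ (A * B) = spectrum ℝ (B * A) := by
  ext μ
  rcases eq_or_ne μ 0 with rfl | h
  · simp only [spectrum.zero_mem_iff]
    rw [Matrix.isUnit_iff_isUnit_det, Matrix.isUnit_iff_isUnit_det, det_mul, det_mul, mul_comm]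
  · exact spectrum.unit_mem_mul_comm (r := Units.mk0 μ h)

lemma spectrum_smul_one_add {n : ℕ} (A : Matrix (Fin n) (Fin n) ℝ) (c μ : ℝ)
    (h : μ ∈ spectrum ℝ (A + c • (1 : Matrix (Fin n) (Fin n) ℝ))) :
    μ - c ∈ spectrum ℝ A := by
  have h' : (μ - c) + c ∈ spectrum ℝ (A + c • (1 : Matrix (Fin n) (Fin n) ℝ)) := by
    simpa using h
  rw [spectrum.add_mem_iff] at h'
  convert h' using 2
  rw [Algebra.algebraMap_eq_smul_one]
  abel

/-- Under the relaxed balanced conditions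
`U_{i+1}ᵀ U_{i+1} − U_i U_iᵀ = λ_i I_n` (for `i = 1, …, L−1`), every eigenvalue of the
positive semidefinite matrix `U_L U_Lᵀ` is at least `max(0, a_1, …, a_{L−1})` where
`a_k = Σ_{i=1}^k λ_{L−i}`. -/
theorem deep_linear_relaxed_balanced_spectrum_lower_bound
    (n L : ℕ) (hn : 0 < n) (hL : 2 ≤ L)
    (U : ℕ → Matrix (Fin n) (Fin n) ℝ) (lam : ℕ → ℝ)
    (hbal : ∀ i, 1 ≤ i → i ≤ L - 1 →
      (U (i + 1))ᵀ * U (i + 1) - U i * (U i)ᵀ =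
        lam i • (1 : Matrix (Fin n) (Fin n) ℝ)) :
    ∀ μ ∈ spectrum ℝ (U L * (U L)ᵀ),
      (Finset.range L).sup' (Finset.nonempty_range_iff.mpr (by omega))
        (fun k => ∑ i ∈ Finset.Icc 1 k, lam (L - i)) ≤ μ := by
  intro μ hμ
  have key : ∀ k, k + 1 ≤ L →
      μ - (∑ i ∈ Finset.Icc 1 k, lam (L - i)) ∈
        spectrum ℝ (U (L - k) * (U (L - k))ᵀ) := by
    intro k
    induction k with
    | zero => intro _; simpa using hμ
    | succ k ih =>
      intro hk
      have ihk := ih (by omega)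
      set j : ℕ := L - (k + 1) with hj
      have hLk : L - k = j + 1 := by omega
      have hbalj : (U (j + 1))ᵀ * U (j + 1) - U j * (U j)ᵀ =
          lam j • (1 : Matrix (Fin n) (Fin n) ℝ) := hbal j (by omega) (by omega)
      have heq : (U (j + 1))ᵀ * U (j + 1) =
          U j * (U j)ᵀ + lam j • (1 : Matrix (Fin n) (Fin n) ℝ) := by
        rw [← hbalj]; abel
      rw [hLk] at ihk
      rw [spectrum_mul_comm'] at ihk
      rw [heq] at ihk
      have := spectrum_smul_one_add _ _ _ ihk
      have hsum : ∑ i ∈ Finset.Icc 1 (k + 1), lam (L - i) =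
          (∑ i ∈ Finset.Icc 1 k, lam (L - i)) + lam j := by
        rw [Finset.sum_Icc_succ_top (by omega)]

      rw [hsum, show μ - (∑ i ∈ Finset.Icc 1 k, lam (L - i) + lam j) =
        μ - ∑ i ∈ Finset.Icc 1 k, lam (L - i) - lam j from by ring]
      exact this
  apply Finset.sup'_le
  intro k hk
  have hk' : k + 1 ≤ L := Finset.mem_range.mp hk
  have := psd_spectrum_nonneg _ (key k hk')
  linarith
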